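/- Let K be a field, let g ≥ 0, and let D ∈ K[X] be a polynomial of degree 2g + 2 that is not the square of a polynomial. Let Y ∈ K((X⁻¹)) satisfy Y² = D. Then for all polynomials x, y ∈ K[X] with y ≠ 0 one has deg(yY − x) ≥ −deg y − (g + 1). (Consequently every partial quotient of the continued fraction expansion of Y = √D has degree at most g + 1.) -/

import Mathlib

open Polynomial HahnSeries
open scoped Classical

/-- The degree of a formal Laurent series in `X⁻¹`: writing `F = ∑ f_i X^{-i}`
(a `LaurentSeries` in the variable `t = X⁻¹`), `deg F = -min {i : f_i ≠ 0}`,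
with `deg 0 = ⊥`. -/
noncomputable def lsDeg {K : Type*} [Field K] (F : LaurentSeries K) : WithBot ℤ :=
  if F = 0 then ⊥ else ((-F.order : ℤ) : WithBot ℤ)

/-- A polynomial in `X` viewed as an element of `K((X⁻¹))`, i.e. evaluated at the
inverse `X = t⁻¹` of the `LaurentSeries` variable `t`. -/
noncomputable def polyToLS {K : Type*} [Field K] (p : K[X]) : LaurentSeries K :=
  Polynomial.aeval (HahnSeries.single (-1 : ℤ) (1 : K)) p

section Aux

variable {K : Type*} [Field K]

lemma algMap_eq_singleLS (a : K) :
    (algebraMap K (LaurentSeries K)) a = HahnSeries.single 0 a := by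
  rw [HahnSeries.algebraMap_apply', PowerSeries.algebraMap_apply, Algebra.algebraMap_self,
    RingHom.id_apply, HahnSeries.ofPowerSeries_C, HahnSeries.C_apply]

@[simp] lemma polyToLS_zero : polyToLS (0 : K[X]) = 0 := by simp [polyToLS]

@[simp] lemma polyToLS_add (p q : K[X]) : polyToLS (p + q) = polyToLS p + polyToLS q := by
  simp [polyToLS]

@[simp] lemma polyToLS_mul (p q : K[X]) : polyToLS (p * q) = polyToLS p * polyToLS q := by
  simp [polyToLS]

@[simp] lemma polyToLS_pow (p : K[X]) (n : ℕ) : polyToLS (p ^ n) = polyToLS p ^ n := by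
  simp [polyToLS]

@[simp] lemma polyToLS_sub (p q : K[X]) : polyToLS (p - q) = polyToLS p - polyToLS q := by
  simp [polyToLS]

lemma polyToLS_monomial (n : ℕ) (a : K) :
    polyToLS (monomial n a) = HahnSeries.single (-(n : ℤ)) a := by
  simp only [polyToLS, aeval_monomial, HahnSeries.single_pow, one_pow, algMap_eq_singleLS,
    HahnSeries.single_mul_single, mul_one, zero_add, nsmul_eq_mul, mul_neg_one]

@[simp] lemma polyToLS_two : polyToLS (2 : K[X]) = (2 : LaurentSeries K) := by
  have h : (2 : K[X]) = monomial 0 (2 : K) := by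
    rw [Polynomial.monomial_zero_left]; exact (map_ofNat Polynomial.C 2).symm
  rw [h, polyToLS_monomial]
  have h2 : (2 : LaurentSeries K) = (algebraMap K (LaurentSeries K)) 2 := by rw [map_ofNat]
  rw [h2, algMap_eq_singleLS]
  norm_num

lemma polyToLS_coeff (p : K[X]) (n : ℕ) :
    (polyToLS p).coeff (-(n : ℤ)) = p.coeff n := by
  induction p using Polynomial.induction_on' with
  | add p q hp hq => rw [polyToLS_add, HahnSeries.coeff_add, hp, hq, Polynomial.coeff_add]
  | monomial k a =>
    rw [polyToLS_monomial, HahnSeries.coeff_single, coeff_monomial]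
    by_cases h : n = k
    · simp [h]
    · rw [if_neg (by omega), if_neg (by omega)]

lemma polyToLS_coeff_pos (p : K[X]) (m : ℤ) (hm : 0 < m) :
    (polyToLS p).coeff m = 0 := by
  induction p using Polynomial.induction_on' with
  | add p q hp hq => rw [polyToLS_add, HahnSeries.coeff_add, hp, hq, add_zero]
  | monomial k a =>
    rw [polyToLS_monomial, HahnSeries.coeff_single, if_neg (by omega)]

lemma polyToLS_injective : Function.Injective (polyToLS (K := K)) := by
  intro p q h
  ext n
  rw [← polyToLS_coeff p n, ← polyToLS_coeff q n, h]

lemma polyToLS_ne_zero {p : K[X]} (hp : p ≠ 0) : polyToLS p ≠ 0 := by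
  intro h
  exact hp (polyToLS_injective (by rw [h, polyToLS_zero]))

lemma polyToLS_order {p : K[X]} (hp : p ≠ 0) :
    (polyToLS p).order = -(p.natDegree : ℤ) := by
  apply le_antisymm
  · apply HahnSeries.order_le_of_coeff_ne_zero
    rw [polyToLS_coeff]
    exact Polynomial.leadingCoeff_ne_zero.mpr hp
  · have hne := polyToLS_ne_zero hp
    have hc := HahnSeries.coeff_order_eq_zero.not.mpr hne
    set m := (polyToLS p).order with hm
    have hm0 : m ≤ 0 := by
      by_contra h
      exact hc (polyToLS_coeff_pos p m (by omega))
    have h1 : (polyToLS p).coeff (-((-m).toNat : ℤ)) ≠ 0 := by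
      rwa [show (-((-m).toNat : ℤ)) = m by omega]
    rw [polyToLS_coeff] at h1
    have := Polynomial.le_natDegree_of_ne_zero h1
    omega

end Aux

theorem partial_quotients_of_sqrt_bounded_degree
    {K : Type*} [Field K] (g : ℕ) (D : K[X])
    (hdeg : D.degree = (2 * g + 2 : ℕ))
    (hnsq : ¬ ∃ e : K[X], D = e ^ 2)
    (Y : LaurentSeries K) (hY : Y ^ 2 = polyToLS D) :
    ∀ x y : K[X], y ≠ 0 →
      ((-(y.natDegree : ℤ) - (g + 1) : ℤ) : WithBot ℤ) ≤
        lsDeg (polyToLS y * Y - polyToLS x) := by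
  intro x y hy
  have hD0 : D ≠ 0 := by
    intro h
    rw [h, degree_zero] at hdeg
    exact absurd hdeg (by exact_mod_cast WithBot.bot_ne_coe)
  have hndD : D.natDegree = 2 * g + 2 := natDegree_eq_of_degree_eq_some hdeg
  have hYne : Y ≠ 0 := by
    intro h
    exact polyToLS_ne_zero hD0 (by rw [← hY, h]; ring)
  have hordY : Y.order = -((g : ℤ) + 1) := by
    have h1 : (Y ^ 2).order = (2 : ℕ) • Y.order := HahnSeries.order_pow Y 2
    rw [hY, polyToLS_order hD0, hndD] at h1
    have h2 : -((2 * g + 2 : ℕ) : ℤ) = 2 * Y.order := by rw [h1]; ring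
    omega
  -- the key "not a square" consequence
  have hxy2 : x ^ 2 ≠ y ^ 2 * D := by
    intro hx2
    apply hnsq
    set i := algebraMap K[X] (RatFunc K) with hi
    have hiy : i y ≠ 0 := fun h => hy (IsFractionRing.injective K[X] (RatFunc K) (by rw [h, map_zero]))
    set q : RatFunc K := i x / i y with hq
    have hq2 : q ^ 2 = i D := by
      rw [hq, div_pow, ← map_pow, ← map_pow, hx2, map_mul]
      field_simp
    have hint : IsIntegral K[X] q := by
      refine ⟨X ^ 2 - Polynomial.C D, monic_X_pow_sub_C D two_ne_zero, ?_⟩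
      rw [eval₂_sub, eval₂_pow, eval₂_X, eval₂_C, hq2, sub_self]
    obtain ⟨e, he⟩ := IsIntegrallyClosed.isIntegral_iff.mp hint
    refine ⟨e, IsFractionRing.injective K[X] (RatFunc K) ?_⟩
    rw [map_pow, he, hq2]
  set E := polyToLS y * Y - polyToLS x with hE
  by_contra hcon
  rcases eq_or_ne E 0 with hE0 | hE0
  · -- then Y = x / y is rational, so D is a square
    have hxy : polyToLS y * Y = polyToLS x := by
      rw [← sub_eq_zero]; exact hE0
    apply hxy2
    apply polyToLS_injective
    rw [polyToLS_pow, ← hxy, polyToLS_mul, polyToLS_pow, mul_pow, hY]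
  · have hlsE : lsDeg E = ((-E.order : ℤ) : WithBot ℤ) := if_neg hE0
    rw [hlsE] at hcon
    have hEord : (y.natDegree : ℤ) + (g + 1) < E.order := by
      have := lt_of_not_ge hcon
      rw [WithBot.coe_lt_coe] at this
      omega
    set F := polyToLS y * Y + polyToLS x with hF
    have hEF : E * F = polyToLS (y ^ 2 * D - x ^ 2) := by
      rw [polyToLS_sub, polyToLS_mul, polyToLS_pow, polyToLS_pow, ← hY]
      rw [hE, hF]; ring
    rcases eq_or_ne F 0 with hF0 | hF0
    · apply hxy2
      have h0' : polyToLS (y ^ 2 * D - x ^ 2) = 0 := by rw [← hEF, hF0, mul_zero]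
      have h0 : y ^ 2 * D - x ^ 2 = 0 := polyToLS_injective (by rw [h0', polyToLS_zero])
      rw [← sub_eq_zero]
      rw [show x ^ 2 - y ^ 2 * D = -(y ^ 2 * D - x ^ 2) by ring, h0, neg_zero]
    · -- F ≠ 0 : bound its order from below
      have h2F : F = polyToLS (2 * y) * Y + (-E) := by
        rw [polyToLS_mul, polyToLS_two, hE, hF]
        ring
      have hFord : -((y.natDegree : ℤ) + (g + 1)) ≤ F.order := by
        have hmin : min (polyToLS (2 * y) * Y).order (-E).order ≤ F.order := by
          rw [h2F]
          exact HahnSeries.min_order_le_order_add (by rw [← h2F]; exact hF0)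
        rw [HahnSeries.order_neg] at hmin
        rcases eq_or_ne ((2 : K[X]) * y) 0 with h2y | h2y
        · rw [h2y, polyToLS_zero, zero_mul, HahnSeries.order_zero] at hmin
          have h0E : min (0 : ℤ) E.order ≤ F.order := hmin
          omega
        · have h2ne : polyToLS ((2 : K[X]) * y) ≠ 0 := polyToLS_ne_zero h2y
          rw [HahnSeries.order_mul h2ne hYne, polyToLS_order h2y, hordY] at hmin
          have hd2y : ((2 : K[X]) * y).natDegree ≤ y.natDegree := by
            have := Polynomial.natDegree_mul_le (p := (2 : K[X])) (q := y)
            simpa using this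
          have hmin' : min (-(((2 : K[X]) * y).natDegree : ℤ) + -((g : ℤ) + 1)) E.order
              ≤ F.order := hmin
          omega
      -- now derive the contradiction
      have hEFne : E * F ≠ 0 := mul_ne_zero hE0 hF0
      have hsubne : y ^ 2 * D - x ^ 2 ≠ 0 := by
        intro h
        rw [h, polyToLS_zero] at hEF
        exact hEFne hEF
      have hord : (E * F).order = E.order + F.order := HahnSeries.order_mul hE0 hF0
      rw [hEF, polyToLS_order hsubne] at hord
      have hnn : (0 : ℤ) ≤ ((y ^ 2 * D - x ^ 2).natDegree : ℤ) := Int.natCast_nonneg _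
      omega
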